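/- In the two-agent one-step setting, the excess variance of the centralised estimator over the decentralised one is bounded by B² · Σ_{j≠i} ε_j², where B = sup_{a^i} ||g(a^i)||, and ε_j = sup_a |A^j(a^{-j}, a^j)| bounds agent j's local advantage A^j(a^{-j},a^j) = Q(a) − E_{a'^j ~ π_j}[Q(a^{-j}, a'^j)]. Consequently the excess variance is at most (n−1)·(εB)² with ε = max_j ε_j. -/

import Mathlib

open Finset

/-- Variance of `f` under weights `w`: `E[f²] − (E[f])²`. -/
def varOf {α : Type*} [Fintype α] (w : α → ℝ) (f : α → ℝ) : ℝ :=
  (∑ a, w a * f a ^ 2) - (∑ a, w a * f a) ^ 2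

namespace MAPGaux

variable {n : ℕ} {A : Fin n → Type*} [∀ i, Fintype (A i)]

/-- Product weight. -/
def mu (π : ∀ i, A i → ℝ) (a : ∀ k, A k) : ℝ := ∏ k, π k (a k)

/-- Expectation under the product weight. -/
def Ex (π : ∀ i, A i → ℝ) (f : (∀ k, A k) → ℝ) : ℝ := ∑ a, mu π a * f a

/-- Averaging operator in coordinate `j`. -/
def Tj (π : ∀ i, A i → ℝ) (j : Fin n) (f : (∀ k, A k) → ℝ) : (∀ k, A k) → ℝ :=
  fun a => ∑ x, π j x * f (Function.update a j x)

/-- Iterated averaging over a list of coordinates. -/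
def iterT (π : ∀ i, A i → ℝ) : List (Fin n) → ((∀ k, A k) → ℝ) → ((∀ k, A k) → ℝ)
  | [], f => f
  | k :: t, f => Tj π k (iterT π t f)

/-- `f` does not depend on coordinate `j`. -/
def Inv (j : Fin n) (f : (∀ k, A k) → ℝ) : Prop :=
  ∀ a x, f (Function.update a j x) = f a

variable (π : ∀ i, A i → ℝ)

lemma mu_nonneg (hπ0 : ∀ i x, 0 ≤ π i x) (a : ∀ k, A k) : 0 ≤ mu π a :=
  Finset.prod_nonneg fun k _ => hπ0 k (a k)

lemma sum_mu (hπ1 : ∀ i, ∑ x, π i x = 1) : ∑ a, mu π a = 1 := by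
  unfold mu
  rw [← Fintype.prod_sum]
  simp [hπ1]

lemma Ex_const (hπ1 : ∀ i, ∑ x, π i x = 1) (c : ℝ) : Ex π (fun _ => c) = c := by
  unfold Ex
  rw [← Finset.sum_mul, sum_mu π hπ1, one_mul]

lemma Ex_mono (hπ0 : ∀ i x, 0 ≤ π i x) {f h : (∀ k, A k) → ℝ} (hfh : ∀ a, f a ≤ h a) :
    Ex π f ≤ Ex π h :=
  Finset.sum_le_sum fun a _ => mul_le_mul_of_nonneg_left (hfh a) (mu_nonneg π hπ0 a)

lemma Ex_sub (f h : (∀ k, A k) → ℝ) :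
    Ex π (fun a => f a - h a) = Ex π f - Ex π h := by
  simp [Ex, mul_sub, Finset.sum_sub_distrib]

lemma Ex_sum {d : ℕ} (f : Fin d → (∀ k, A k) → ℝ) :
    ∑ j : Fin d, Ex π (f j) = Ex π (fun a => ∑ j, f j a) := by
  simp only [Ex, Finset.mul_sum]
  exact Finset.sum_comm

lemma mu_update_mul (j : Fin n) (a : ∀ k, A k) (x : A j) :
    mu π (Function.update a j x) * π j (a j) = mu π a * π j x := by
  have h1 : mu π (Function.update a j x)
      = π j x * ∏ k ∈ Finset.univ.erase j, π k (a k) := by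
    rw [mu, ← Finset.mul_prod_erase _ _ (Finset.mem_univ j)]
    congr 1
    · rw [Function.update_self]
    · exact Finset.prod_congr rfl fun k hk =>
        congrArg (π k) (Function.update_of_ne (Finset.ne_of_mem_erase hk) _ _)
  have h2 : mu π a = π j (a j) * ∏ k ∈ Finset.univ.erase j, π k (a k) := by
    rw [mu, ← Finset.mul_prod_erase _ _ (Finset.mem_univ j)]
  rw [h1, h2]; ring

/-- The swap-update involution. -/
def swapUpd (j : Fin n) : ((∀ k, A k) × A j) ≃ ((∀ k, A k) × A j) where
  toFun p := (Function.update p.1 j p.2, p.1 j)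
  invFun p := (Function.update p.1 j p.2, p.1 j)
  left_inv p := by
    simp [Function.update_idem, Function.update_self, Function.update_eq_self]
  right_inv p := by
    simp [Function.update_idem, Function.update_self, Function.update_eq_self]

lemma Ex_T (hπ1 : ∀ i, ∑ x, π i x = 1) (j : Fin n) (f : (∀ k, A k) → ℝ) :
    Ex π (Tj π j f) = Ex π f := by
  classical
  have h1 : Ex π (Tj π j f)
      = ∑ p : (∀ k, A k) × A j, mu π p.1 * (π j p.2 * f (Function.update p.1 j p.2)) := by
    rw [Fintype.sum_prod_type]
    exact Finset.sum_congr rfl fun a _ => by rw [Tj, Finset.mul_sum]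
  have h2 : ∑ p : (∀ k, A k) × A j, mu π p.1 * (π j p.2 * f (Function.update p.1 j p.2))
      = ∑ p : (∀ k, A k) × A j, mu π p.1 * (π j p.2 * f p.1) := by
    refine Fintype.sum_equiv (swapUpd j) _ _ fun p => ?_
    show mu π p.1 * (π j p.2 * f (Function.update p.1 j p.2))
      = mu π (Function.update p.1 j p.2) * (π j (p.1 j) * f (Function.update p.1 j p.2))
    have h := mu_update_mul π j p.1 p.2
    linear_combination (-(f (Function.update p.1 j p.2))) * h
  have h3 : ∑ p : (∀ k, A k) × A j, mu π p.1 * (π j p.2 * f p.1) = Ex π f := by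
    rw [Fintype.sum_prod_type]
    refine Finset.sum_congr rfl fun a _ => ?_
    have key : ∀ y : A j, mu π (a, y).1 * (π j (a, y).2 * f (a, y).1)
        = mu π a * f a * π j y := fun y => by ring
    rw [Finset.sum_congr rfl fun y _ => key y, ← Finset.mul_sum, hπ1 j, mul_one]
  rw [h1, h2, h3]

lemma Ex_iterT (hπ1 : ∀ i, ∑ x, π i x = 1) (l : List (Fin n)) (f : (∀ k, A k) → ℝ) :
    Ex π (iterT π l f) = Ex π f := by
  induction l with
  | nil => rfl
  | cons k t ih => rw [iterT, Ex_T π hπ1, ih]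

lemma inv_T_self (j : Fin n) (f : (∀ k, A k) → ℝ) : Inv j (Tj π j f) := by
  intro a x
  simp only [Tj, Function.update_idem]

lemma inv_T_of {j : Fin n} {f : (∀ k, A k) → ℝ} (hf : Inv j f) (k : Fin n) :
    Inv j (Tj π k f) := by
  by_cases hk : k = j
  · subst hk; exact inv_T_self π k f
  · intro a x
    simp only [Tj]
    refine Finset.sum_congr rfl fun y _ => ?_
    rw [Function.update_comm (Ne.symm hk), hf]

lemma inv_iterT {j : Fin n} {l : List (Fin n)} (hj : j ∈ l) (f : (∀ k, A k) → ℝ) :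
    Inv j (iterT π l f) := by
  induction l with
  | nil => cases hj
  | cons k t ih =>
    rcases List.mem_cons.mp hj with h | h
    · subst h; exact inv_T_self π j _
    · exact inv_T_of π (ih h) k

lemma T_mul_inv {j : Fin n} {G : (∀ k, A k) → ℝ} (hG : Inv j G) (f : (∀ k, A k) → ℝ) :
    Tj π j (fun a => f a * G a) = fun a => Tj π j f a * G a := by
  funext a
  simp only [Tj, Finset.sum_mul]
  exact Finset.sum_congr rfl fun x _ => by rw [hG]; ring

lemma iterT_mul_inv {l : List (Fin n)} {G : (∀ k, A k) → ℝ} (hG : ∀ k ∈ l, Inv k G)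
    (f : (∀ k, A k) → ℝ) :
    iterT π l (fun a => f a * G a) = fun a => iterT π l f a * G a := by
  induction l with
  | nil => rfl
  | cons k t ih =>
    rw [iterT, ih fun k hk => hG k (List.mem_cons_of_mem _ hk),
      T_mul_inv π (hG k (List.mem_cons_self)), iterT]

lemma T_sub (j : Fin n) (f h : (∀ k, A k) → ℝ) :
    Tj π j (fun a => f a - h a) = fun a => Tj π j f a - Tj π j h a := by
  funext a
  simp [Tj, mul_sub, Finset.sum_sub_distrib]

lemma iterT_sub (l : List (Fin n)) (f h : (∀ k, A k) → ℝ) :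
    iterT π l (fun a => f a - h a) = fun a => iterT π l f a - iterT π l h a := by
  induction l with
  | nil => rfl
  | cons k t ih => rw [iterT, ih, T_sub]; rfl

lemma T_comm {j k : Fin n} (hjk : j ≠ k) (f : (∀ k, A k) → ℝ) :
    Tj π j (Tj π k f) = Tj π k (Tj π j f) := by
  funext a
  simp only [Tj, Finset.mul_sum]
  rw [Finset.sum_comm]
  refine Finset.sum_congr rfl fun y _ => Finset.sum_congr rfl fun x _ => ?_
  rw [Function.update_comm hjk]
  ring

lemma iterT_T_comm {k : Fin n} {l : List (Fin n)} (hk : k ∉ l) (f : (∀ k, A k) → ℝ) :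
    Tj π k (iterT π l f) = iterT π l (Tj π k f) := by
  induction l with
  | nil => rfl
  | cons j t ih =>
    have hkj : k ≠ j := fun h => hk (h ▸ List.mem_cons_self)
    rw [iterT, T_comm π hkj, ih fun h => hk (List.mem_cons_of_mem _ h), iterT]

lemma T_abs_le (hπ0 : ∀ i x, 0 ≤ π i x) (hπ1 : ∀ i, ∑ x, π i x = 1)
    {f : (∀ k, A k) → ℝ} {c : ℝ} (hc : ∀ a, |f a| ≤ c) (j : Fin n) (a : ∀ k, A k) :
    |Tj π j f a| ≤ c := by
  calc |Tj π j f a| ≤ ∑ x, |π j x * f (Function.update a j x)| :=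
        Finset.abs_sum_le_sum_abs _ _
    _ ≤ ∑ x, π j x * c := by
        refine Finset.sum_le_sum fun x _ => ?_
        rw [abs_mul, abs_of_nonneg (hπ0 j x)]
        exact mul_le_mul_of_nonneg_left (hc _) (hπ0 j x)
    _ = c := by rw [← Finset.sum_mul, hπ1 j, one_mul]

lemma iterT_abs_le (hπ0 : ∀ i x, 0 ≤ π i x) (hπ1 : ∀ i, ∑ x, π i x = 1)
    {f : (∀ k, A k) → ℝ} {c : ℝ} (hc : ∀ a, |f a| ≤ c) (l : List (Fin n)) (a : ∀ k, A k) :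
    |iterT π l f a| ≤ c := by
  induction l generalizing a with
  | nil => exact hc a
  | cons k t ih => exact T_abs_le π hπ0 hπ1 (fun b => ih b) k a

lemma T_sq (hπ1 : ∀ i, ∑ x, π i x = 1) (j : Fin n) (f : (∀ k, A k) → ℝ) (a : ∀ k, A k) :
    Tj π j (fun b => f b ^ 2) a - (Tj π j f a) ^ 2
      = ∑ x, π j x * (f (Function.update a j x) - Tj π j f a) ^ 2 := by
  simp only [Tj]
  set c := ∑ x, π j x * f (Function.update a j x) with hc
  have key : ∀ x : A j, π j x * (f (Function.update a j x) - c) ^ 2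
      = π j x * f (Function.update a j x) ^ 2
        - 2 * c * (π j x * f (Function.update a j x)) + c ^ 2 * π j x := fun x => by ring
  rw [Finset.sum_congr rfl fun x _ => key x, Finset.sum_add_distrib, Finset.sum_sub_distrib,
    ← Finset.mul_sum, ← Finset.mul_sum, hπ1 j, ← hc]
  ring

lemma depends_only {i : Fin n} {F : (∀ k, A k) → ℝ}
    (h : ∀ j : Fin n, j ≠ i → Inv j F) {a b : ∀ k, A k} (hab : a i = b i) : F a = F b := by
  classical
  have key : ∀ s : Finset (Fin n), i ∉ s → F (s.piecewise b a) = F a := by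
    intro s
    induction s using Finset.induction_on with
    | empty => intro _; rw [Finset.piecewise_empty]
    | @insert j s hj ih =>
      intro hi
      have hji : j ≠ i := fun hh => hi (hh ▸ Finset.mem_insert_self j s)
      rw [Finset.piecewise_insert, h j hji, ih fun hh => hi (Finset.mem_insert_of_mem hh)]
  have hb : (Finset.univ.erase i).piecewise b a = b := by
    funext k
    by_cases hk : k = i
    · subst hk
      simp [Finset.piecewise, hab]
    · simp [Finset.piecewise, hk]
  rw [← hb, key _ (Finset.notMem_erase i _)]

lemma T_pin {i j : Fin n} (hj : j ≠ i) (x : A i) (f : (∀ k, A k) → ℝ) :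
    Tj π j (fun b => f (Function.update b i x)) =
      fun b => Tj π j f (Function.update b i x) := by
  funext b
  simp only [Tj]
  refine Finset.sum_congr rfl fun y _ => ?_
  rw [Function.update_comm hj]

lemma iterT_pin {i : Fin n} {l : List (Fin n)} (hl : i ∉ l) (x : A i)
    (f : (∀ k, A k) → ℝ) :
    iterT π l (fun b => f (Function.update b i x)) =
      fun b => iterT π l f (Function.update b i x) := by
  induction l with
  | nil => rfl
  | cons k t ih =>
    have hk : k ≠ i := fun h => hl (h ▸ List.mem_cons_self)
    rw [iterT, ih fun h => hl (List.mem_cons_of_mem _ h), T_pin π hk, iterT]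

end MAPGaux

open MAPGaux in
/-- The excess total variance of the centralised MAPG estimator over the decentralised
one is bounded by `B² Σ_{j≠i} ε_j²`, and hence by `(n−1)(εB)²`. -/
theorem excess_variance_centralised_bound
    {n : ℕ} {A : Fin n → Type*} [∀ i, Fintype (A i)] [∀ i, Nonempty (A i)] {d : ℕ}
    (π : ∀ i, A i → ℝ) (hπ0 : ∀ i x, 0 ≤ π i x) (hπ1 : ∀ i, ∑ x, π i x = 1)
    (Q : (∀ i, A i) → ℝ) (i : Fin n)
    (g : A i → Fin d → ℝ) (hg : ∀ j, ∑ x, π i x * g x j = 0)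
    (B : ℝ) (hB0 : 0 ≤ B) (hB : ∀ x, ∑ j, (g x j) ^ 2 ≤ B ^ 2)
    (ε : Fin n → ℝ) (hε0 : ∀ j, 0 ≤ ε j)
    (hε : ∀ (j : Fin n) (a : ∀ k, A k),
      |Q a - ∑ x : A j, π j x * Q (Function.update a j x)| ≤ ε j)
    (εmax : ℝ) (hεmax : ∀ j, ε j ≤ εmax) :
    (∑ j : Fin d, varOf (fun a : ∀ k, A k => ∏ k, π k (a k))
          (fun a => Q a * g (a i) j))
      - (∑ j : Fin d, varOf (π i)
          (fun x => (∑ b : ∀ k, A k, (∏ k, π k (b k)) * Q (Function.update b i x)) * g x j))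
      ≤ B ^ 2 * ∑ j ∈ Finset.univ.erase i, (ε j) ^ 2
    ∧ (∑ j : Fin d, varOf (fun a : ∀ k, A k => ∏ k, π k (a k))
          (fun a => Q a * g (a i) j))
      - (∑ j : Fin d, varOf (π i)
          (fun x => (∑ b : ∀ k, A k, (∏ k, π k (b k)) * Q (Function.update b i x)) * g x j))
      ≤ ((n : ℝ) - 1) * (εmax * B) ^ 2 := by
  classical
  -- deviation bound for iterated averages
  have R_dev : ∀ (k : Fin n) (t : List (Fin n)), k ∉ t → ∀ b,
      |iterT π t Q b - Tj π k (iterT π t Q) b| ≤ ε k := by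
    intro k t hk b
    have hcf := congrFun (iterT_sub π t Q (Tj π k Q)) b
    rw [iterT_T_comm π hk, ← hcf]
    refine iterT_abs_le π hπ0 hπ1 (fun a => ?_) t b
    simpa [Tj] using hε k a
  -- telescoping estimate
  have tele : ∀ l : List (Fin n), l.Nodup → i ∉ l →
      (∑ j : Fin d, (Ex π (fun a => (Q a * g (a i) j) ^ 2)
        - Ex π (fun a => (iterT π l Q a * g (a i) j) ^ 2)))
      ≤ B ^ 2 * (l.map fun k => ε k ^ 2).sum := by
    intro l hnd hil
    induction l with
    | nil => simp [iterT]
    | cons k t ih =>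
      have hknt : k ∉ t := (List.nodup_cons.mp hnd).1
      have htnd : t.Nodup := (List.nodup_cons.mp hnd).2
      have hki : k ≠ i := fun h => hil (h ▸ List.mem_cons_self)
      have hit : i ∉ t := fun h => hil (List.mem_cons_of_mem _ h)
      set R := iterT π t Q with hR
      -- invariance of the g-factor under coordinate k
      have hGinv : ∀ j : Fin d, Inv k (fun a : ∀ m, A m => g (a i) j) := by
        intro j a x
        simp only [Function.update_of_ne (Ne.symm hki)]
      -- step bound
      have step : ∀ j : Fin d,
          Ex π (fun a => (R a * g (a i) j) ^ 2)
            - Ex π (fun a => (iterT π (k :: t) Q a * g (a i) j) ^ 2)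
          ≤ Ex π (fun a => ε k ^ 2 * g (a i) j ^ 2) := by
        intro j
        have hmul : (fun a => Tj π k R a * g (a i) j)
            = Tj π k (fun a => R a * g (a i) j) := (T_mul_inv π (hGinv j) R).symm
        have h1 : Ex π (fun a => (R a * g (a i) j) ^ 2)
            = Ex π (Tj π k (fun a => (R a * g (a i) j) ^ 2)) :=
          (Ex_T π hπ1 k _).symm
        rw [show iterT π (k :: t) Q = Tj π k R from rfl, h1, ← Ex_sub]
        refine Ex_mono π hπ0 fun a => ?_
        have hTsq := T_sq π hπ1 k (fun a => R a * g (a i) j) a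
        calc Tj π k (fun b => (R b * g (b i) j) ^ 2) a - (Tj π k R a * g (a i) j) ^ 2
            = ∑ x, π k x * ((fun b => R b * g (b i) j) (Function.update a k x)
                - Tj π k (fun b => R b * g (b i) j) a) ^ 2 := by
              rw [← hTsq]
              congr 1
              exact congrArg (· ^ 2) (congrFun hmul a)
          _ ≤ ∑ x, π k x * (ε k ^ 2 * g (a i) j ^ 2) := by
              refine Finset.sum_le_sum fun x _ => ?_
              refine mul_le_mul_of_nonneg_left ?_ (hπ0 k x)
              have hdiff : (fun b => R b * g (b i) j) (Function.update a k x)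
                  - Tj π k (fun b => R b * g (b i) j) a
                  = (R (Function.update a k x) - Tj π k R (Function.update a k x))
                      * g (a i) j := by
                simp only
                rw [← hmul]
                simp only
                rw [Function.update_of_ne (Ne.symm hki), inv_T_self π k R a x]
                ring
              rw [hdiff, mul_pow]
              refine mul_le_mul_of_nonneg_right ?_ (sq_nonneg _)
              have hb := R_dev k t hknt (Function.update a k x)
              calc (R (Function.update a k x) - Tj π k R (Function.update a k x)) ^ 2
                  = |R (Function.update a k x) - Tj π k R (Function.update a k x)| ^ 2 := by
                    rw [sq_abs]
                _ ≤ ε k ^ 2 := pow_le_pow_left₀ (abs_nonneg _) hb 2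
          _ = ε k ^ 2 * g (a i) j ^ 2 := by
              rw [← Finset.sum_mul, hπ1 k, one_mul]
      -- combine step over j and the induction hypothesis
      have split : ∀ j : Fin d,
          Ex π (fun a => (Q a * g (a i) j) ^ 2)
            - Ex π (fun a => (iterT π (k :: t) Q a * g (a i) j) ^ 2)
          = (Ex π (fun a => (Q a * g (a i) j) ^ 2)
              - Ex π (fun a => (R a * g (a i) j) ^ 2))
            + (Ex π (fun a => (R a * g (a i) j) ^ 2)
              - Ex π (fun a => (iterT π (k :: t) Q a * g (a i) j) ^ 2)) := fun j => by ring
      rw [Finset.sum_congr rfl fun j _ => split j, Finset.sum_add_distrib]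
      have hstep : (∑ j : Fin d, (Ex π (fun a => (R a * g (a i) j) ^ 2)
            - Ex π (fun a => (iterT π (k :: t) Q a * g (a i) j) ^ 2)))
          ≤ B ^ 2 * ε k ^ 2 := by
        calc (∑ j : Fin d, (Ex π (fun a => (R a * g (a i) j) ^ 2)
              - Ex π (fun a => (iterT π (k :: t) Q a * g (a i) j) ^ 2)))
            ≤ ∑ j : Fin d, Ex π (fun a => ε k ^ 2 * g (a i) j ^ 2) :=
              Finset.sum_le_sum fun j _ => step j
          _ = Ex π (fun a => ∑ j : Fin d, ε k ^ 2 * g (a i) j ^ 2) := Ex_sum π _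
          _ ≤ Ex π (fun _ => ε k ^ 2 * B ^ 2) := by
              refine Ex_mono π hπ0 fun a => ?_
              rw [← Finset.mul_sum]
              exact mul_le_mul_of_nonneg_left (hB (a i)) (sq_nonneg _)
          _ = ε k ^ 2 * B ^ 2 := Ex_const π hπ1 _
          _ = B ^ 2 * ε k ^ 2 := mul_comm _ _
      have hIH := ih htnd hit
      calc (∑ j : Fin d, (Ex π (fun a => (Q a * g (a i) j) ^ 2)
              - Ex π (fun a => (R a * g (a i) j) ^ 2)))
            + (∑ j : Fin d, (Ex π (fun a => (R a * g (a i) j) ^ 2)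
              - Ex π (fun a => (iterT π (k :: t) Q a * g (a i) j) ^ 2)))
          ≤ B ^ 2 * (t.map fun k => ε k ^ 2).sum + B ^ 2 * ε k ^ 2 :=
            add_le_add hIH hstep
        _ = B ^ 2 * ((k :: t).map fun k => ε k ^ 2).sum := by
            simp [List.sum_cons]; ring
  -- the list of coordinates other than i
  set L : List (Fin n) := (Finset.univ.erase i).toList with hL
  have hLnd : L.Nodup := Finset.nodup_toList _
  have hiL : i ∉ L := by
    rw [hL, Finset.mem_toList]
    exact Finset.notMem_erase i _
  have hmemL : ∀ j : Fin n, j ≠ i → j ∈ L := by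
    intro j hj
    rw [hL, Finset.mem_toList, Finset.mem_erase]
    exact ⟨hj, Finset.mem_univ j⟩
  set R := iterT π L Q with hRdef
  have hRinv : ∀ j : Fin n, j ≠ i → Inv j R := fun j hj =>
    inv_iterT π (hmemL j hj) Q
  -- identification of R with the decentralised critic
  set Qi : A i → ℝ := fun x => ∑ b : ∀ k, A k, (∏ k, π k (b k)) * Q (Function.update b i x)
    with hQi
  have hQiEx : ∀ x, Qi x = Ex π (fun b => Q (Function.update b i x)) := fun x => rfl
  have hReval : ∀ a : ∀ k, A k, R a = Qi (a i) := by
    intro a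
    have h1 : Qi (a i) = Ex π (iterT π L (fun b => Q (Function.update b i (a i)))) := by
      rw [hQiEx, Ex_iterT π hπ1]
    have h2 : iterT π L (fun b => Q (Function.update b i (a i)))
        = fun b => R (Function.update b i (a i)) := iterT_pin π hiL (a i) Q
    have h3 : (fun b => R (Function.update b i (a i))) = fun _ => R a := by
      funext b
      exact depends_only hRinv (by rw [Function.update_self])
    rw [h1, h2, h3, Ex_const π hπ1]
  -- expectation of functions of the i-th coordinate
  have Ex_eval : ∀ h : A i → ℝ, Ex π (fun a => h (a i)) = ∑ x, π i x * h x := by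
    intro h
    rw [← Ex_T π hπ1 i (fun a => h (a i))]
    have : Tj π i (fun a => h (a i)) = fun _ => ∑ x, π i x * h x := by
      funext a
      simp [Tj, Function.update_self]
    rw [this, Ex_const π hπ1]
  -- rewrite the excess variance
  have hmean : ∀ j : Fin d,
      ∑ x, π i x * (Qi x * g x j) = Ex π (fun a => Q a * g (a i) j) := by
    intro j
    have hGinv : ∀ k ∈ L, Inv k (fun a : ∀ m, A m => g (a i) j) := by
      intro k hk a x
      have hki : k ≠ i := fun h => hiL (h ▸ hk)
      simp only [Function.update_of_ne (Ne.symm hki)]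
    calc ∑ x, π i x * (Qi x * g x j)
        = Ex π (fun a => Qi (a i) * g (a i) j) :=
          (Ex_eval (fun x => Qi x * g x j)).symm
      _ = Ex π (fun a => R a * g (a i) j) := by
          refine congrArg (Ex π) ?_
          funext a; rw [hReval]
      _ = Ex π (iterT π L (fun a => Q a * g (a i) j)) := by
          rw [iterT_mul_inv π hGinv]
      _ = Ex π (fun a => Q a * g (a i) j) := Ex_iterT π hπ1 _ _
  have hsq : ∀ j : Fin d,
      ∑ x, π i x * (Qi x * g x j) ^ 2 = Ex π (fun a => (R a * g (a i) j) ^ 2) := by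
    intro j
    calc ∑ x, π i x * (Qi x * g x j) ^ 2
        = Ex π (fun a => (Qi (a i) * g (a i) j) ^ 2) :=
          (Ex_eval (fun x => (Qi x * g x j) ^ 2)).symm
      _ = Ex π (fun a => (R a * g (a i) j) ^ 2) :=
          congrArg (Ex π) (funext fun a => by rw [hReval])
  have hrewrite :
      (∑ j : Fin d, varOf (fun a : ∀ k, A k => ∏ k, π k (a k))
          (fun a => Q a * g (a i) j))
      - (∑ j : Fin d, varOf (π i) (fun x => Qi x * g x j))
      = ∑ j : Fin d, (Ex π (fun a => (Q a * g (a i) j) ^ 2)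
          - Ex π (fun a => (R a * g (a i) j) ^ 2)) := by
    rw [← Finset.sum_sub_distrib]
    refine Finset.sum_congr rfl fun j _ => ?_
    rw [varOf, varOf, hmean j, hsq j]
    simp only [Ex, mu]
    ring
  have hmain :
      (∑ j : Fin d, varOf (fun a : ∀ k, A k => ∏ k, π k (a k))
          (fun a => Q a * g (a i) j))
      - (∑ j : Fin d, varOf (π i) (fun x => Qi x * g x j))
      ≤ B ^ 2 * ∑ j ∈ Finset.univ.erase i, (ε j) ^ 2 := by
    rw [hrewrite]
    calc ∑ j : Fin d, (Ex π (fun a => (Q a * g (a i) j) ^ 2)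
          - Ex π (fun a => (R a * g (a i) j) ^ 2))
        ≤ B ^ 2 * (L.map fun k => ε k ^ 2).sum := tele L hLnd hiL
      _ = B ^ 2 * ∑ j ∈ Finset.univ.erase i, (ε j) ^ 2 := by
          rw [hL, Finset.sum_map_toList]
  refine ⟨hmain, hmain.trans ?_⟩
  -- second bound
  have hεm0 : 0 ≤ εmax := (hε0 i).trans (hεmax i)
  have hcard : (Finset.univ.erase i).card = n - 1 := by
    rw [Finset.card_erase_of_mem (Finset.mem_univ i), Finset.card_univ, Fintype.card_fin]
  have hn1 : 1 ≤ n := i.pos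
  have hsum : ∑ j ∈ Finset.univ.erase i, (ε j) ^ 2 ≤ ((n : ℝ) - 1) * εmax ^ 2 := by
    calc ∑ j ∈ Finset.univ.erase i, (ε j) ^ 2
        ≤ ∑ _j ∈ Finset.univ.erase i, εmax ^ 2 :=
          Finset.sum_le_sum fun j _ => pow_le_pow_left₀ (hε0 j) (hεmax j) 2
      _ = ((Finset.univ.erase i).card : ℝ) * εmax ^ 2 := by
          rw [Finset.sum_const, nsmul_eq_mul]
      _ = ((n : ℝ) - 1) * εmax ^ 2 := by
          rw [hcard, Nat.cast_sub hn1, Nat.cast_one]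
  calc B ^ 2 * ∑ j ∈ Finset.univ.erase i, (ε j) ^ 2
      ≤ B ^ 2 * (((n : ℝ) - 1) * εmax ^ 2) :=
        mul_le_mul_of_nonneg_left hsum (sq_nonneg B)
    _ = ((n : ℝ) - 1) * (εmax * B) ^ 2 := by ring
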